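/- Let K₀ be a number field and K a quadratic field extension of K₀, and let † denote the nontrivial element of the Galois group Gal(K/K₀). An order O in K satisfies O† = O if and only if O ∩ K₀ = (O + O†) ∩ K₀, where O + O† denotes the additive subgroup of K generated by O and O†. -/

import Mathlib

/-- An order in a number field `K`: a subring (equivalently, a `ℤ`-subalgebra) of `K` that is
finitely generated as a `ℤ`-module and contains a `ℚ`-basis of `K` (i.e. spans `K` over `ℚ`). -/
def IsOrder (K : Type*) [Field K] [NumberField K] (O : Subalgebra ℤ K) : Prop :=
  (Subalgebra.toSubmodule O).FG ∧ Submodule.span ℚ (O : Set K) = ⊤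

/-- Let `K / K₀` be a quadratic extension of number fields with nontrivial Galois
automorphism `σ = †`.  An order `O` in `K` satisfies `O† = O` if and only if
`O ∩ K₀ = (O + O†) ∩ K₀`. -/
theorem order_conjugation_stable_iff (K₀ K : Type*) [Field K₀] [NumberField K₀]
    [Field K] [NumberField K] [Algebra K₀ K] (h2 : Module.finrank K₀ K = 2)
    (σ : K ≃ₐ[K₀] K) (hσ : σ ≠ AlgEquiv.refl)
    (O : Subalgebra ℤ K) (hO : IsOrder K O) :
    O.map (RingHom.toIntAlgHom σ.toRingEquiv.toRingHom) = O ↔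
      (O : Set K) ∩ Set.range (algebraMap K₀ K) =
        ((Subalgebra.toSubmodule O ⊔
            Subalgebra.toSubmodule (O.map (RingHom.toIntAlgHom σ.toRingEquiv.toRingHom)) :
          Submodule ℤ K) : Set K) ∩ Set.range (algebraMap K₀ K) := by
  classical
  haveI : FiniteDimensional K₀ K := Module.finite_of_finrank_eq_succ h2
  have hσ1 : σ ≠ 1 := hσ
  let H : Subgroup (K ≃ₐ[K₀] K) := Subgroup.zpowers σ
  have hdvd : Module.finrank (IntermediateField.fixedField H) K ∣ 2 := by
    refine Dvd.intro (Module.finrank K₀ (IntermediateField.fixedField H)) ?_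
    rw [← h2, mul_comm]
    exact Module.finrank_mul_finrank K₀ (IntermediateField.fixedField H) K
  have hcard : Module.finrank (IntermediateField.fixedField H) K = orderOf σ := by
    rw [IntermediateField.finrank_fixedField_eq_card]
    exact Nat.card_zpowers σ
  have hord : orderOf σ = 2 := by
    have h1 : orderOf σ ∣ 2 := hcard ▸ hdvd
    rcases (Nat.dvd_prime Nat.prime_two).mp h1 with h | h
    · exact absurd (orderOf_eq_one_iff.mp h) hσ1
    · exact h
  have hσ2 : ∀ x : K, σ (σ x) = x := by
    intro x
    have : σ ^ 2 = 1 := hord ▸ pow_orderOf_eq_one σ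
    have := congrArg (fun f : K ≃ₐ[K₀] K => f x) this
    simpa [pow_succ, pow_zero] using this
  -- fixed points of σ are in K₀
  have hfixbot : IntermediateField.fixedField H = ⊥ := by
    rw [← IntermediateField.finrank_eq_one_iff]
    have := Module.finrank_mul_finrank K₀ (IntermediateField.fixedField H) K
    rw [hcard, hord, h2] at this
    omega
  have hfix : ∀ x : K, σ x = x → x ∈ Set.range (algebraMap K₀ K) := by
    intro x hx
    have hmem : x ∈ IntermediateField.fixedField H := by
      rintro ⟨g, hg⟩
      obtain ⟨n, rfl⟩ := hg
      show (σ ^ n) x = x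
      have hnat : ∀ m : ℕ, (σ ^ m) x = x := by
        intro m
        induction m with
        | zero => simp
        | succ k ih => rw [pow_succ, AlgEquiv.mul_apply, hx]; exact ih
      obtain ⟨m, rfl | rfl⟩ := n.eq_nat_or_neg
      · rw [zpow_natCast]; exact hnat m
      · rw [zpow_neg, zpow_natCast]
        have := hnat m
        exact (σ ^ m).injective (by rw [← AlgEquiv.mul_apply, mul_inv_cancel]; simpa using this.symm)
    rw [hfixbot] at hmem
    exact IntermediateField.mem_bot.mp hmem
  have hφ : ∀ x : K, (RingHom.toIntAlgHom σ.toRingEquiv.toRingHom) x = σ x := fun _ => rfl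
  constructor
  · intro h
    rw [h, sup_idem]
    rfl
  · intro h
    have key : ∀ x ∈ O, σ x ∈ O := by
      intro x hx
      have h1 : x + σ x ∈ (Subalgebra.toSubmodule O ⊔
          Subalgebra.toSubmodule (O.map (RingHom.toIntAlgHom σ.toRingEquiv.toRingHom)) :
          Submodule ℤ K) :=
        Submodule.add_mem _ (Submodule.mem_sup_left hx)
          (Submodule.mem_sup_right ⟨x, hx, rfl⟩)
      have h2' : σ (x + σ x) = x + σ x := by
        rw [map_add, hσ2, add_comm]
      have h3 : x + σ x ∈ (O : Set K) ∩ Set.range (algebraMap K₀ K) := by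
        rw [h]; exact ⟨h1, hfix _ h2'⟩
      have h4 : x + σ x ∈ O := h3.1
      have := O.sub_mem h4 hx
      simpa using this
    apply le_antisymm
    · rintro y ⟨x, hx, rfl⟩
      exact key x hx
    · intro x hx
      exact ⟨σ x, key x hx, hσ2 x⟩
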